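/- Let f : [0,T) → ℝ be a maximal solution of f'' = Ξ(f', f) with f(0) = 1, f'(0) = 1, where Ξ is continuous and Ξ(x,y) ≥ ε x^a y^b for x,y ≥ 1 with ε > 0 and 2a + b ≥ 3. Then f' tends to +∞ as t → T (where T < ∞ is the endpoint of the maximal interval). -/

import Mathlib

open Set Filter Metric intervalIntegral

-- helper: eventually greater on the right when derivative is positive
lemma eventually_gt_right {φ : ℝ → ℝ} {x d : ℝ} (hd : 0 < d) (h : HasDerivAt φ d x) :
    ∀ᶠ s in nhdsWithin x (Ioi x), φ x < φ s := by
  have h1 : ∀ᶠ s in nhdsWithin x ({x}ᶜ), 0 < slope φ x s :=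
    (hasDerivAt_iff_tendsto_slope.mp h).eventually (eventually_gt_nhds hd)
  have h2 : ∀ᶠ s in nhdsWithin x (Ioi x), 0 < slope φ x s :=
    h1.filter_mono (nhdsWithin_mono x fun s hs => by
      simpa using (ne_of_gt (hs : x < s)))
  filter_upwards [h2, self_mem_nhdsWithin] with s hslope hs
  rw [slope_def_field] at hslope
  have h3 : 0 < s - x := sub_pos.mpr hs
  have h4 := mul_pos hslope h3
  rw [div_mul_cancel₀ _ h3.ne'] at h4
  linarith

-- helper: monotone on Ico from nonneg derivative
lemma monoIco {φ : ℝ → ℝ} {s e : ℝ} (hc : ContinuousOn φ (Ico s e))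
    (hd : ∀ x ∈ Ioo s e, HasDerivAt φ (deriv φ x) x ∧ 0 ≤ deriv φ x) :
    MonotoneOn φ (Ico s e) := by
  refine monotoneOn_of_deriv_nonneg (convex_Ico s e) hc ?_ ?_
  · rw [interior_Ico]
    exact fun x hx => ((hd x hx).1.differentiableAt).differentiableWithinAt
  · rw [interior_Ico]
    exact fun x hx => (hd x hx).2


lemma mcshane (ξ : ℝ × ℝ → ℝ) (hξ : Continuous ξ) (z₀ : ℝ × ℝ) :
    ∃ Q : ℕ → (ℝ × ℝ) → ℝ, ∃ D : ℝ, 0 ≤ D ∧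
      (∀ n : ℕ, LipschitzWith (n : NNReal) (Q n)) ∧
      (∀ n : ℕ, ∀ p ∈ closedBall z₀ 2, |Q n p| ≤ D) ∧
      (∀ p ∈ closedBall z₀ 2, |ξ p| ≤ D) ∧
      (∀ η > (0:ℝ), ∃ N, ∀ n ≥ N, ∀ p ∈ closedBall z₀ 2, |Q n p - ξ p| ≤ η) := by
  set K : Set (ℝ × ℝ) := closedBall z₀ 2 with hKdef
  have hK : IsCompact K := isCompact_closedBall _ _
  have hz₀K : z₀ ∈ K := mem_closedBall_self (by norm_num)
  haveI : Nonempty K := ⟨⟨z₀, hz₀K⟩⟩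
  obtain ⟨D₀, hD₀⟩ := hK.exists_bound_of_continuousOn hξ.continuousOn
  set D : ℝ := max D₀ 0 with hDdef
  have hD : ∀ p ∈ K, |ξ p| ≤ D := fun p hp => le_max_of_le_left (by
    simpa [Real.norm_eq_abs] using hD₀ p hp)
  have hDnn : (0:ℝ) ≤ D := le_max_right _ _
  set Q : ℕ → (ℝ × ℝ) → ℝ := fun n p => ⨆ q : K, (ξ q - n * dist p (q : ℝ × ℝ)) with hQdef
  have bdd : ∀ (n : ℕ) (p : ℝ × ℝ),
      BddAbove (range fun q : K => ξ q - n * dist p (q : ℝ × ℝ)) := by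
    intro n p
    refine ⟨D, ?_⟩
    rintro x ⟨q, rfl⟩
    have h1 : ξ (q : ℝ × ℝ) ≤ D := (abs_le.mp (hD q q.2)).2
    have h2 : (0:ℝ) ≤ (n:ℝ) * dist p (q:ℝ×ℝ) := mul_nonneg n.cast_nonneg dist_nonneg
    simp only []
    linarith
  have key : ∀ (n : ℕ) (p p' : ℝ × ℝ), Q n p ≤ Q n p' + n * dist p p' := by
    intro n p p'
    refine ciSup_le fun q => ?_
    have h1 : ξ q - n * dist p (q : ℝ × ℝ) ≤ (ξ q - n * dist p' (q : ℝ × ℝ)) + n * dist p p' := by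
      have hn : (0:ℝ) ≤ n := n.cast_nonneg
      nlinarith [dist_comm p p' ▸ dist_triangle p' p (q:ℝ×ℝ)]
    exact h1.trans (add_le_add (le_ciSup (bdd n p') q) le_rfl)
  have hlip : ∀ n : ℕ, LipschitzWith (n : NNReal) (Q n) := by
    intro n
    refine LipschitzWith.of_dist_le_mul fun p p' => ?_
    rw [Real.dist_eq, abs_sub_le_iff]
    have hc : ((n : NNReal) : ℝ) = (n : ℝ) := by push_cast; ring
    rw [hc]
    constructor
    · have := key n p p'; linarith
    · have := key n p' p; rw [dist_comm] at this; linarith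
  have hge : ∀ (n : ℕ), ∀ p ∈ K, ξ p ≤ Q n p := by
    intro n p hp
    refine le_ciSup_of_le (bdd n p) ⟨p, hp⟩ ?_
    simp
  have hle : ∀ (n : ℕ) (p : ℝ × ℝ), Q n p ≤ D := by
    intro n p
    refine ciSup_le fun q => ?_
    have h1 : ξ (q : ℝ × ℝ) ≤ D := (abs_le.mp (hD q q.2)).2
    have h2 : (0:ℝ) ≤ (n:ℝ) * dist p (q:ℝ×ℝ) := mul_nonneg n.cast_nonneg dist_nonneg
    linarith
  have habs : ∀ (n : ℕ), ∀ p ∈ K, |Q n p| ≤ D := by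
    intro n p hp
    rw [abs_le]
    refine ⟨?_, hle n p⟩
    have h1 : -D ≤ ξ p := (abs_le.mp (hD p hp)).1
    linarith [hge n p hp]
  refine ⟨Q, D, hDnn, hlip, habs, hD, ?_⟩
  intro η hη
  have huc := hK.uniformContinuousOn_of_continuous hξ.continuousOn
  rw [Metric.uniformContinuousOn_iff] at huc
  obtain ⟨δ, hδ, hδ'⟩ := huc η hη
  refine ⟨⌈(2 * D) / δ⌉₊, fun n hn p hp => ?_⟩
  have hQge : ξ p ≤ Q n p := hge n p hp
  rw [abs_le]
  constructor
  · linarith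
  · rw [sub_le_iff_le_add]
    refine ciSup_le fun q => ?_
    rcases le_or_gt δ (dist p (q : ℝ × ℝ)) with h | h
    · have h1 : ξ (q : ℝ × ℝ) ≤ D := (abs_le.mp (hD q q.2)).2
      have h2 : -D ≤ ξ p := (abs_le.mp (hD p hp)).1
      have h3 : (⌈(2 * D) / δ⌉₊ : ℝ) ≥ (2 * D) / δ := Nat.le_ceil _
      have h4 : (n : ℝ) ≥ (2 * D) / δ := le_trans h3 (by exact_mod_cast hn)
      have h5 : (n : ℝ) * dist p (q : ℝ × ℝ) ≥ ((2 * D) / δ) * δ := by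
        have := mul_le_mul h4 h (le_of_lt hδ) (le_trans (div_nonneg (by linarith) hδ.le) h4)
        nlinarith
      have h6 : (2 * D) / δ * δ = 2 * D := div_mul_cancel₀ _ hδ.ne'
      linarith
    · have := hδ' p hp (q : ℝ × ℝ) q.2 (by rwa [dist_comm] at h ⊢)
      rw [Real.dist_eq, abs_sub_lt_iff] at this
      have hd : (0:ℝ) ≤ n * dist p (q:ℝ×ℝ) :=
        mul_nonneg n.cast_nonneg dist_nonneg
      linarith [this.2]

lemma hdwa_fst {f : ℝ → ℝ × ℝ} {v : ℝ × ℝ} {s : Set ℝ} {x : ℝ}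
    (h : HasDerivWithinAt f v s x) : HasDerivWithinAt (fun t => (f t).1) v.1 s x := by
  simpa using h.hasFDerivWithinAt.fst.hasDerivWithinAt

lemma hdwa_snd {f : ℝ → ℝ × ℝ} {v : ℝ × ℝ} {s : Set ℝ} {x : ℝ}
    (h : HasDerivWithinAt f v s x) : HasDerivWithinAt (fun t => (f t).2) v.2 s x := by
  simpa using h.hasFDerivWithinAt.snd.hasDerivWithinAt


lemma peano (ξ : ℝ × ℝ → ℝ) (hξ : Continuous ξ) (z₀ : ℝ × ℝ) (T : ℝ) :
    ∃ δ > (0:ℝ), ∃ A : ℝ → ℝ × ℝ, Continuous A ∧ A T = z₀ ∧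
      (∀ s, A s ∈ closedBall z₀ 1) ∧
      ∀ t ∈ Icc T (T + δ),
        ((A t).1 = z₀.1 + ∫ s in T..t, (A s).2) ∧
        ((A t).2 = z₀.2 + ∫ s in T..t, ξ (A s)) := by
  obtain ⟨Q, D, hDnn, hQlip, hQabs, hξabs, hQunif⟩ := mcshane ξ hξ z₀
  set C₀ : ℝ := max (‖z₀‖ + 1) D + 1 with hC₀def
  have hC₀pos : 0 < C₀ := by positivity
  have hC₀ge : ‖z₀‖ + 1 ≤ C₀ := by
    have := le_max_left (‖z₀‖ + 1) D; linarith
  have hC₀geD : D ≤ C₀ := by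
    have := le_max_right (‖z₀‖ + 1) D; linarith
  set δ : ℝ := 1 / C₀ with hδdef
  have hδpos : 0 < δ := by positivity
  have hle : T ≤ T + δ := by linarith
  have hTmem : T ∈ Icc T (T + δ) := ⟨le_refl _, hle⟩
  have hball12 : closedBall z₀ 1 ⊆ closedBall z₀ 2 :=
    closedBall_subset_closedBall (by norm_num)
  have hcoe : ((C₀.toNNReal : ℝ)) = C₀ := Real.coe_toNNReal _ hC₀pos.le
  -- norm bound for the approximating fields
  have hnorm : ∀ (n : ℕ), ∀ p ∈ closedBall z₀ 1, ‖((p.2 : ℝ), Q n p)‖ ≤ C₀ := by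
    intro n p hp
    rw [Prod.norm_def]
    have h1 : ‖p‖ - ‖z₀‖ ≤ dist p z₀ := by
      simpa [dist_eq_norm] using norm_sub_norm_le p z₀
    have h2 : dist p z₀ ≤ 1 := mem_closedBall.mp hp
    have h3 : ‖p.2‖ ≤ ‖p‖ := norm_snd_le p
    have h4 : |Q n p| ≤ D := hQabs n p (hball12 hp)
    rw [Real.norm_eq_abs (Q n p)]
    refine max_le (by linarith) (by linarith)
  -- the Picard–Lindelöf problems
  have hpl : ∀ n : ℕ, IsPicardLindelof (fun (_ : ℝ) (p : ℝ × ℝ) => ((p.2 : ℝ), Q n p))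
      (⟨T, hTmem⟩ : Icc T (T + δ)) z₀ 1 0 C₀.toNNReal (1 ⊔ (n : NNReal)) := by
    intro n
    refine ⟨?_, fun _ _ => continuousOn_const, ?_, ?_⟩
    · intro t _
      exact (LipschitzWith.prodMk LipschitzWith.prod_snd (hQlip n)).lipschitzOnWith
    · intro t _ x hx
      rw [hcoe]
      refine hnorm n x ?_
      simpa using hx
    · rw [hcoe]
      have : max (T + δ - T) (T - T) = δ := by
        rw [max_eq_left] <;> linarith
      show C₀ * max (T + δ - T) (T - T) ≤ ((1:NNReal):ℝ) - ((0:NNReal):ℝ)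
      rw [this, hδdef, NNReal.coe_one, NNReal.coe_zero, sub_zero, mul_one_div, div_self hC₀pos.ne']
  have hz₀0 : z₀ ∈ closedBall z₀ ((0 : NNReal) : ℝ) := mem_closedBall_self (by simp)
  have hfn : ∀ n, ∃ f : ODE.FunSpace (⟨T, hTmem⟩ : Icc T (T + δ)) z₀ 0 C₀.toNNReal,
      Function.IsFixedPt (ODE.FunSpace.next (hpl n) hz₀0) f :=
    fun n => ODE.FunSpace.exists_isFixedPt_next (hpl n) hz₀0
  choose fn hfnfix using hfn
  set F : ℕ → ℝ → ℝ × ℝ := fun n s => (fn n).compProj s with hFdef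
  have hFc : ∀ n, Continuous (F n) :=
    fun n => (fn n).continuous_compProj
  have hFicc : ∀ (n : ℕ) (t : ℝ) (ht : t ∈ Icc T (T + δ)), F n t = fn n ⟨t, ht⟩ := by
    intro n t ht
    exact (fn n).compProj_of_mem ht
  have hFval : ∀ (n : ℕ) (s : ℝ), F n s ∈ closedBall z₀ 1 := by
    intro n s
    have := (fn n).compProj_mem_closedBall (hpl n).mul_max_le (t := s)
    rw [NNReal.coe_one] at this
    exact this
  have hFT : ∀ n, F n T = z₀ := by
    intro n
    rw [hFicc n T hTmem]
    exact (fn n).apply_of_zero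
  have hFderiv : ∀ (n : ℕ) (t : ℝ) (ht : t ∈ Icc T (T + δ)),
      HasDerivWithinAt (F n) ((F n t).2, Q n (F n t)) (Icc T (T + δ)) t := by
    intro n t ht
    have hfc : ContinuousOn (Function.uncurry (fun (_ : ℝ) (p : ℝ × ℝ) => ((p.2 : ℝ), Q n p)))
        ((Icc T (T + δ)) ×ˢ (univ : Set (ℝ × ℝ))) :=
      (continuous_snd.snd.prodMk ((hQlip n).continuous.comp continuous_snd)).continuousOn
    have h := ODE.hasDerivWithinAt_picard_Icc hTmem hfc (hFc n).continuousOn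
      (fun _ _ => mem_univ _) z₀ ht
    refine h.congr (fun s hs => ?_) ?_
    · rw [hFicc n s hs]
      have := congrArg (fun β => β ⟨s, hs⟩) (hfnfix n)
      simp only [ODE.FunSpace.next_apply] at this
      exact this.symm
    · rw [hFicc n t ht]
      have := congrArg (fun β => β ⟨t, ht⟩) (hfnfix n)
      simp only [ODE.FunSpace.next_apply] at this
      exact this.symm
  -- scalar integral identities for each approximation
  have heq1 : ∀ (n : ℕ) (t : ℝ) (ht : t ∈ Icc T (T + δ)),
      (F n t).1 = z₀.1 + ∫ s in T..t, (F n s).2 := by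
    intro n t ht
    have hcont : ContinuousOn (fun s => (F n s).1) (Icc T t) :=
      ((hFc n).fst).continuousOn
    have hderiv : ∀ x ∈ Ioo T t, HasDerivWithinAt (fun s => (F n s).1) ((F n x).2) (Ioi x) x := by
      intro x hx
      have hxI : x ∈ Icc T (T + δ) := ⟨hx.1.le, hx.2.le.trans ht.2⟩
      have hxI' : x ∈ Ioo T (T + δ) := ⟨hx.1, lt_of_lt_of_le hx.2 ht.2⟩
      have h := (hFderiv n x hxI).hasDerivAt (Icc_mem_nhds hxI'.1 hxI'.2)
      exact (hdwa_fst h.hasDerivWithinAt)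
    have hint : IntervalIntegrable (fun s => (F n s).2) MeasureTheory.volume T t :=
      ((hFc n).snd).intervalIntegrable _ _
    have := integral_eq_sub_of_hasDeriv_right_of_le ht.1 hcont hderiv hint
    rw [this, hFT n]
    ring
  have heq2 : ∀ (n : ℕ) (t : ℝ) (ht : t ∈ Icc T (T + δ)),
      (F n t).2 = z₀.2 + ∫ s in T..t, Q n (F n s) := by
    intro n t ht
    have hcont : ContinuousOn (fun s => (F n s).2) (Icc T t) :=
      ((hFc n).snd).continuousOn
    have hderiv : ∀ x ∈ Ioo T t, HasDerivWithinAt (fun s => (F n s).2) (Q n (F n x)) (Ioi x) x := by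
      intro x hx
      have hxI : x ∈ Icc T (T + δ) := ⟨hx.1.le, hx.2.le.trans ht.2⟩
      have hxI' : x ∈ Ioo T (T + δ) := ⟨hx.1, lt_of_lt_of_le hx.2 ht.2⟩
      have h := (hFderiv n x hxI).hasDerivAt (Icc_mem_nhds hxI'.1 hxI'.2)
      exact (hdwa_snd h.hasDerivWithinAt)
    have hint : IntervalIntegrable (fun s => Q n (F n s)) MeasureTheory.volume T t :=
      (((hQlip n).continuous).comp (hFc n)).intervalIntegrable _ _
    have := integral_eq_sub_of_hasDeriv_right_of_le ht.1 hcont hderiv hint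
    rw [this, hFT n]
    ring
  -- Arzelà–Ascoli
  set S : Set C(Icc T (T + δ), ℝ × ℝ) :=
    {h | LipschitzWith C₀.toNNReal h ∧ (∀ x, h x ∈ closedBall z₀ 1) ∧ h ⟨T, hTmem⟩ = z₀}
    with hSdef
  set G : ℕ → C(Icc T (T + δ), ℝ × ℝ) := fun n => ⟨fn n, (fn n).continuous⟩ with hGdef
  have hGS : ∀ n, G n ∈ S := by
    intro n
    refine ⟨(fn n).lipschitzWith, fun x => by
      have h := (fn n).mem_closedBall (hpl n).mul_max_le (t := x)
      rw [NNReal.coe_one] at h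
      exact h, ?_⟩
    exact (fn n).apply_of_zero
  have hScompact : IsCompact S := by
    apply ArzelaAscoli.isCompact_of_equicontinuous
    · -- compactness of the image in the product topology
      have himage : ContinuousMap.toFun '' S =
          {g : Icc T (T + δ) → ℝ × ℝ | LipschitzWith C₀.toNNReal g ∧
            (∀ x, g x ∈ closedBall z₀ 1) ∧ g ⟨T, hTmem⟩ = z₀} := by
        ext g
        constructor
        · rintro ⟨h, hh, rfl⟩
          exact hh
        · intro hg
          exact ⟨⟨g, hg.1.continuous⟩, hg, rfl⟩
      rw [himage]
      have hclosed : IsClosed {g : Icc T (T + δ) → ℝ × ℝ | LipschitzWith C₀.toNNReal g ∧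
          (∀ x, g x ∈ closedBall z₀ 1) ∧ g ⟨T, hTmem⟩ = z₀} := by
        have e : {g : Icc T (T + δ) → ℝ × ℝ | LipschitzWith C₀.toNNReal g ∧
            (∀ x, g x ∈ closedBall z₀ 1) ∧ g ⟨T, hTmem⟩ = z₀} =
            {g : Icc T (T + δ) → ℝ × ℝ | LipschitzWith C₀.toNNReal g} ∩
            ({g : Icc T (T + δ) → ℝ × ℝ | ∀ x, g x ∈ closedBall z₀ 1} ∩
             {g : Icc T (T + δ) → ℝ × ℝ | g ⟨T, hTmem⟩ = z₀}) := by
          ext g; simp [mem_setOf_eq, and_assoc]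
        rw [e]
        refine (isClosed_setOf_lipschitzWith _).inter (IsClosed.inter ?_ ?_)
        · have e2 : {g : Icc T (T + δ) → ℝ × ℝ | ∀ x, g x ∈ closedBall z₀ 1} =
              ⋂ (x : Icc T (T + δ)), (fun g : Icc T (T + δ) → ℝ × ℝ => g x) ⁻¹'
                closedBall z₀ 1 := by
            ext g; simp [mem_setOf_eq]
          rw [e2]
          exact isClosed_iInter fun x =>
            IsClosed.preimage (continuous_apply x) isClosed_closedBall
        · exact isClosed_eq (continuous_apply _) continuous_const
      refine IsCompact.of_isClosed_subset (isCompact_univ_pi fun _ =>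
        isCompact_closedBall z₀ 1) hclosed ?_
      intro g hg
      exact fun x _ => hg.2.1 x
    · -- equicontinuity
      refine Metric.equicontinuous_of_continuity_modulus (fun d => C₀ * d) ?_ _ ?_
      · have : Tendsto (fun d : ℝ => C₀ * d) (nhds 0) (nhds (C₀ * 0)) :=
          (continuous_const.mul continuous_id).tendsto 0
        simpa using this
      · rintro x y ⟨h, hh⟩
        have := hh.1.dist_le_mul x y
        rwa [hcoe] at this
  obtain ⟨α, hαS, φ, hφ, hconv⟩ := hScompact.tendsto_subseq hGS
  have huconv : TendstoUniformly (fun k x => G (φ k) x) α atTop :=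
    ContinuousMap.tendsto_iff_tendstoUniformly.mp hconv
  set A : ℝ → ℝ × ℝ := fun s => α (projIcc T (T + δ) hle s) with hAdef
  have hAc : Continuous A := α.continuous.comp continuous_projIcc
  have hAicc : ∀ (s : ℝ) (hs : s ∈ Icc T (T + δ)), A s = α ⟨s, hs⟩ := by
    intro s hs
    simp only [hAdef, projIcc_of_mem hle hs]
  have hAT : A T = z₀ := by
    rw [hAicc T hTmem]
    exact hαS.2.2
  have hAval : ∀ s, A s ∈ closedBall z₀ 1 := fun s => hαS.2.1 _
  have hpt : ∀ (s : ℝ) (hs : s ∈ Icc T (T + δ)),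
      Tendsto (fun k => F (φ k) s) atTop (nhds (A s)) := by
    intro s hs
    have h := huconv.tendsto_at ⟨s, hs⟩
    rw [hAicc s hs]
    refine h.congr fun k => ?_
    rw [hFicc (φ k) s hs]
    rfl
  refine ⟨δ, hδpos, A, hAc, hAT, hAval, fun t ht => ⟨?_, ?_⟩⟩
  · -- first integral identity
    have lim1 : Tendsto (fun k => (F (φ k) t).1) atTop (nhds ((A t).1)) :=
      (continuous_fst.tendsto _).comp (hpt t ht)
    have limint1 : Tendsto (fun k => ∫ s in T..t, (F (φ k) s).2) atTop
        (nhds (∫ s in T..t, (A s).2)) := by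
      apply tendsto_integral_filter_of_dominated_convergence (bound := fun _ => C₀)
      · exact Eventually.of_forall fun k =>
          ((hFc (φ k)).snd).aestronglyMeasurable.restrict
      · refine Eventually.of_forall fun k => MeasureTheory.ae_of_all _ fun x _ => ?_
        have h1 : ‖F (φ k) x‖ - ‖z₀‖ ≤ dist (F (φ k) x) z₀ := by
          simpa [dist_eq_norm] using norm_sub_norm_le (F (φ k) x) z₀
        have h2 : dist (F (φ k) x) z₀ ≤ 1 := mem_closedBall.mp (hFval (φ k) x)
        have h3 : ‖(F (φ k) x).2‖ ≤ ‖F (φ k) x‖ := norm_snd_le _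
        calc ‖(F (φ k) x).2‖ ≤ ‖z₀‖ + 1 := by linarith
        _ ≤ C₀ := hC₀ge
      · exact intervalIntegrable_const
      · refine MeasureTheory.ae_of_all _ fun x hx => ?_
        rw [uIoc_of_le ht.1] at hx
        have hxI : x ∈ Icc T (T + δ) := ⟨hx.1.le, hx.2.trans ht.2⟩
        exact (continuous_snd.tendsto _).comp (hpt x hxI)
    have e1 : Tendsto (fun k => (F (φ k) t).1) atTop
        (nhds (z₀.1 + ∫ s in T..t, (A s).2)) := by
      have := limint1.const_add z₀.1
      refine this.congr fun k => ?_
      exact (heq1 (φ k) t ht).symm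
    exact tendsto_nhds_unique lim1 e1
  · -- second integral identity
    have lim2 : Tendsto (fun k => (F (φ k) t).2) atTop (nhds ((A t).2)) :=
      (continuous_snd.tendsto _).comp (hpt t ht)
    have limint2 : Tendsto (fun k => ∫ s in T..t, Q (φ k) (F (φ k) s)) atTop
        (nhds (∫ s in T..t, ξ (A s))) := by
      apply tendsto_integral_filter_of_dominated_convergence (bound := fun _ => C₀)
      · exact Eventually.of_forall fun k =>
          (((hQlip (φ k)).continuous).comp (hFc (φ k))).aestronglyMeasurable.restrict
      · refine Eventually.of_forall fun k => MeasureTheory.ae_of_all _ fun x _ => ?_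
        have := hQabs (φ k) _ (hball12 (hFval (φ k) x))
        rw [Real.norm_eq_abs]
        linarith
      · exact intervalIntegrable_const
      · refine MeasureTheory.ae_of_all _ fun x hx => ?_
        rw [uIoc_of_le ht.1] at hx
        have hxI : x ∈ Icc T (T + δ) := ⟨hx.1.le, hx.2.trans ht.2⟩
        have t1 : Tendsto (fun k => ξ (F (φ k) x)) atTop (nhds (ξ (A x))) :=
          (hξ.tendsto _).comp (hpt x hxI)
        have t2 : Tendsto (fun k => Q (φ k) (F (φ k) x) - ξ (F (φ k) x)) atTop (nhds 0) := by
          rw [Metric.tendsto_atTop]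
          intro η hη
          obtain ⟨N, hN⟩ := hQunif (η / 2) (by linarith)
          refine ⟨N, fun k hk => ?_⟩
          rw [Real.dist_eq, sub_zero]
          have := hN (φ k) (le_trans hk hφ.le_apply) _ (hball12 (hFval (φ k) x))
          linarith
        have := t2.add t1
        simpa using this
    have e2 : Tendsto (fun k => (F (φ k) t).2) atTop
        (nhds (z₀.2 + ∫ s in T..t, ξ (A s))) := by
      have := limint2.const_add z₀.2
      refine this.congr fun k => ?_
      exact (heq2 (φ k) t ht).symm
    exact tendsto_nhds_unique lim2 e2


/-- `f` solves the ODE `f'' = Ξ(f', f)` on the interval `[0, T)`,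
being twice differentiable there. -/
def SolvesODE (Ξ : ℝ → ℝ → ℝ) (f : ℝ → ℝ) (T : ℝ) : Prop :=
  ∀ t ∈ Set.Ico (0 : ℝ) T,
    DifferentiableAt ℝ f t ∧ DifferentiableAt ℝ (deriv f) t ∧
      deriv (deriv f) t = Ξ (deriv f t) (f t)

theorem stmt_1 (Ξ : ℝ → ℝ → ℝ) (hΞcont : Continuous fun p : ℝ × ℝ => Ξ p.1 p.2)
    (ε : ℝ) (hε : 0 < ε) (a b : ℕ) (hab : 3 ≤ 2 * a + b)
    (hlb : ∀ x y : ℝ, 1 ≤ x → 1 ≤ y → ε * x ^ a * y ^ b ≤ Ξ x y)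
    (T : ℝ) (hT : 0 < T) (f : ℝ → ℝ)
    (hf0 : f 0 = 1) (hf'0 : deriv f 0 = 1)
    (hsol : SolvesODE Ξ f T)
    (hmax : ¬ ∃ (T' : ℝ) (g : ℝ → ℝ), T < T' ∧
        (∀ t ∈ Set.Ico (0 : ℝ) T, g t = f t) ∧ SolvesODE Ξ g T') :
    Filter.Tendsto (deriv f) (nhdsWithin T (Set.Iio T)) Filter.atTop := by
  set u : ℝ → ℝ := deriv f with hudef
  -- positivity of Ξ along points with coordinates ≥ 1
  have hΞpos : ∀ x y : ℝ, 1 ≤ x → 1 ≤ y → 0 < Ξ x y := by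
    intro x y hx hy
    have h1 : (1:ℝ) ≤ x ^ a := one_le_pow₀ hx
    have h2 : (1:ℝ) ≤ y ^ b := one_le_pow₀ hy
    have h3 := hlb x y hx hy
    nlinarith [mul_pos (mul_pos hε (lt_of_lt_of_le one_pos h1)) (lt_of_lt_of_le one_pos h2)]
  -- Part A : f ≥ 1 and u ≥ 1 on [0, T)
  have hge1 : ∀ t ∈ Ico (0:ℝ) T, 1 ≤ f t ∧ 1 ≤ u t := by
    by_contra hcon
    push_neg at hcon
    obtain ⟨tw, htw, htw2⟩ := hcon
    set B : Set ℝ := {t | t ∈ Ico (0:ℝ) T ∧ (f t < 1 ∨ u t < 1)} with hBdef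
    have hBne : B.Nonempty := by
      refine ⟨tw, htw, ?_⟩
      rcases lt_or_ge (f tw) 1 with h | h
      · exact Or.inl h
      · exact Or.inr (htw2 h)
    have hBbdd : BddBelow B := ⟨0, fun x hx => hx.1.1⟩
    set t₀ : ℝ := sInf B with ht₀def
    have ht₀0 : 0 ≤ t₀ := le_csInf hBne fun x hx => hx.1.1
    obtain ⟨twB, htwB⟩ := hBne
    have ht₀T : t₀ < T := lt_of_le_of_lt (csInf_le hBbdd htwB) htwB.1.2
    have ht₀Ico : t₀ ∈ Ico (0:ℝ) T := ⟨ht₀0, ht₀T⟩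
    -- everything below t₀ is fine
    have hbelow : ∀ s, 0 ≤ s → s < t₀ → 1 ≤ f s ∧ 1 ≤ u s := by
      intro s hs0 hst₀
      by_contra hc
      have hsB : s ∈ B := by
        refine ⟨⟨hs0, lt_trans hst₀ ht₀T⟩, ?_⟩
        rcases lt_or_ge (f s) 1 with h | h
        · exact Or.inl h
        · rcases lt_or_ge (u s) 1 with h' | h'
          · exact Or.inr h'
          · exact absurd ⟨h, h'⟩ hc
      exact absurd (csInf_le hBbdd hsB) (not_le.mpr hst₀)
    -- values at t₀ are still ≥ 1
    have hAt : 1 ≤ f t₀ ∧ 1 ≤ u t₀ := by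
      rcases eq_or_lt_of_le ht₀0 with h0 | h0
      · constructor
        · rw [← h0, hf0]
        · rw [← h0]; exact hf'0.ge
      · haveI : (nhdsWithin t₀ (Iio t₀)).NeBot := nhdsLT_neBot t₀
        have hfc : Tendsto f (nhdsWithin t₀ (Iio t₀)) (nhds (f t₀)) :=
          ((hsol t₀ ht₀Ico).1.continuousAt.tendsto).mono_left nhdsWithin_le_nhds
        have huc : Tendsto u (nhdsWithin t₀ (Iio t₀)) (nhds (u t₀)) :=
          ((hsol t₀ ht₀Ico).2.1.continuousAt.tendsto).mono_left nhdsWithin_le_nhds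
        have hev : ∀ᶠ s in nhdsWithin t₀ (Iio t₀), 1 ≤ f s ∧ 1 ≤ u s := by
          filter_upwards [Ioo_mem_nhdsLT_of_mem (⟨h0, le_refl t₀⟩ : t₀ ∈ Ioc 0 t₀)]
            with s hs
          exact hbelow s hs.1.le hs.2
        exact ⟨ge_of_tendsto hfc (hev.mono fun s hs => hs.1),
               ge_of_tendsto huc (hev.mono fun s hs => hs.2)⟩
    -- t₀ itself is not in B
    have ht₀notB : t₀ ∉ B := by
      rintro ⟨-, h | h⟩
      · exact absurd hAt.1 (not_le.mpr h)
      · exact absurd hAt.2 (not_le.mpr h)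
    -- derivative positivity pushes f and u up just to the right of t₀
    have hu'pos : 0 < deriv u t₀ := by
      rw [(hsol t₀ ht₀Ico).2.2]
      exact hΞpos _ _ hAt.2 hAt.1
    have hevu : ∀ᶠ s in nhdsWithin t₀ (Ioi t₀), u t₀ < u s :=
      eventually_gt_right hu'pos
        (((hsol t₀ ht₀Ico).2.1).hasDerivAt)
    have hf'pos : 0 < deriv f t₀ := by
      rw [← hudef]
      linarith [hAt.2]
    have hevf : ∀ᶠ s in nhdsWithin t₀ (Ioi t₀), f t₀ < f s :=
      eventually_gt_right hf'pos (((hsol t₀ ht₀Ico).1).hasDerivAt)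
    obtain ⟨c, hc, hsub⟩ := mem_nhdsGT_iff_exists_Ioo_subset.mp (hevu.and hevf)
    obtain ⟨b', hb'B, hb'lt⟩ := exists_lt_of_csInf_lt ⟨twB, htwB⟩
      (show sInf B < min c T from lt_min hc (by rw [← ht₀def]; exact ht₀T))
    have hb'ge : t₀ ≤ b' := csInf_le hBbdd hb'B
    have hb'ne : t₀ ≠ b' := fun h => ht₀notB (h ▸ hb'B)
    have hb'Ioo : b' ∈ Ioo t₀ c := ⟨lt_of_le_of_ne hb'ge hb'ne, lt_of_lt_of_le hb'lt (min_le_left _ _)⟩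
    have := hsub hb'Ioo
    rcases hb'B.2 with h | h
    · linarith [this.2, hAt.1]
    · linarith [this.1, hAt.2]
  -- u is monotone on [0, T)
  have hucontOn : ∀ t1 : ℝ, t1 ≤ T → ContinuousOn u (Ico 0 t1) := by
    intro t1 ht1
    exact fun t ht => ((hsol t ⟨ht.1, lt_of_lt_of_le ht.2 ht1⟩).2.1.continuousAt).continuousWithinAt
  have hmono : MonotoneOn u (Ico 0 T) := by
    refine monoIco (hucontOn T le_rfl) fun x hx => ?_
    have hx' : x ∈ Ico (0:ℝ) T := ⟨hx.1.le, hx.2⟩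
    refine ⟨(hsol x hx').2.1.hasDerivAt, ?_⟩
    rw [(hsol x hx').2.2]
    exact (hΞpos _ _ (hge1 x hx').2 (hge1 x hx').1).le
  -- by contradiction: assume deriv f does not tend to atTop
  by_contra hnot
  -- then u is bounded above on [0, T)
  have hbdd : BddAbove (u '' Ico 0 T) := by
    by_contra hnb
    apply hnot
    rw [Filter.tendsto_atTop]
    intro c
    obtain ⟨x, ⟨t₁, ht₁, rfl⟩, hxc⟩ := not_bddAbove_iff.mp hnb c
    filter_upwards [Ioo_mem_nhdsLT_of_mem (⟨ht₁.2, le_refl T⟩ : T ∈ Ioc t₁ T)] with s hs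
    have : u t₁ ≤ u s := hmono ht₁ ⟨le_trans ht₁.1 hs.1.le, hs.2⟩ hs.1.le
    linarith
  -- limits of u and f at T⁻
  have hmaxmono : ∀ x ∈ Iio T, ∀ y ∈ Iio T, x ≤ y → u (max x 0) ≤ u (max y 0) := by
    intro x hx y hy hxy
    exact hmono ⟨le_max_right _ _, max_lt hx hT⟩ ⟨le_max_right _ _, max_lt hy hT⟩
      (max_le_max hxy le_rfl)
  have hubmono : MonotoneOn (fun t => u (max t 0)) (Iio T) := fun x hx y hy hxy =>
    hmaxmono x hx y hy hxy
  have hubsub : (fun t => u (max t 0)) '' Iio T ⊆ u '' Ico 0 T := by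
    rintro _ ⟨x, hx, rfl⟩
    exact ⟨max x 0, ⟨le_max_right _ _, max_lt hx hT⟩, rfl⟩
  have hubbdd : BddAbove ((fun t => u (max t 0)) '' Iio T) := hbdd.mono hubsub
  set L₀ : ℝ := sSup ((fun t => u (max t 0)) '' Iio T) with hL₀def
  have hubtendsto : Tendsto (fun t => u (max t 0)) (nhdsWithin T (Iio T)) (nhds L₀) :=
    hubmono.tendsto_nhdsLT hubbdd
  have hutendsto : Tendsto u (nhdsWithin T (Iio T)) (nhds L₀) := by
    refine hubtendsto.congr' ?_
    filter_upwards [Ioo_mem_nhdsLT_of_mem (⟨hT, le_refl T⟩ : T ∈ Ioc 0 T)] with s hs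
    rw [max_eq_left hs.1.le]
  have hL₀ge : ∀ t ∈ Ico (0:ℝ) T, u t ≤ L₀ := by
    intro t ht
    have : u (max t 0) ∈ (fun t => u (max t 0)) '' Iio T := ⟨t, ht.2, rfl⟩
    have h2 := le_csSup hubbdd this
    rwa [max_eq_left ht.1] at h2
  have hL₀1 : 1 ≤ L₀ := by
    have := hL₀ge 0 ⟨le_rfl, hT⟩
    rw [hf'0] at this
    exact this
  -- f is monotone and bounded on [0,T)
  have hfcontOn : ∀ t1 : ℝ, t1 ≤ T → ContinuousOn f (Ico 0 t1) := by
    intro t1 ht1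
    exact fun t ht => ((hsol t ⟨ht.1, lt_of_lt_of_le ht.2 ht1⟩).1.continuousAt).continuousWithinAt
  have hfmono : MonotoneOn f (Ico 0 T) := by
    refine monoIco (hfcontOn T le_rfl) fun x hx => ?_
    have hx' : x ∈ Ico (0:ℝ) T := ⟨hx.1.le, hx.2⟩
    refine ⟨(hsol x hx').1.hasDerivAt, ?_⟩
    have := (hge1 x hx').2
    rw [hudef] at this
    linarith
  have hfbdd : BddAbove (f '' Ico 0 T) := by
    -- f t ≤ 1 + L₀ * T via the auxiliary monotone function L₀ * s - f s
    have haux : MonotoneOn (fun s => L₀ * s - f s) (Ico 0 T) := by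
      refine monoIco ?_ fun x hx => ?_
      · exact (continuousOn_const.mul continuousOn_id).sub (hfcontOn T le_rfl)
      · have hx' : x ∈ Ico (0:ℝ) T := ⟨hx.1.le, hx.2⟩
        have hD : HasDerivAt (fun s => L₀ * s - f s) (L₀ - u x) x := by
          have h := ((hasDerivAt_id' x).const_mul L₀).sub (hsol x hx').1.hasDerivAt
          rw [mul_one] at h
          exact h
        refine ⟨by rw [hD.deriv]; exact hD, ?_⟩
        rw [hD.deriv]
        linarith [hL₀ge x hx']
    refine ⟨1 + L₀ * T, ?_⟩
    rintro _ ⟨t, ht, rfl⟩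
    have h1 := haux ⟨le_rfl, hT⟩ ht ht.1
    simp only [mul_zero, hf0] at h1
    nlinarith [ht.2, ht.1, hL₀1]
  have hfbsub : (fun t => f (max t 0)) '' Iio T ⊆ f '' Ico 0 T := by
    rintro _ ⟨x, hx, rfl⟩
    exact ⟨max x 0, ⟨le_max_right _ _, max_lt hx hT⟩, rfl⟩
  have hfbbdd : BddAbove ((fun t => f (max t 0)) '' Iio T) := hfbdd.mono hfbsub
  have hfbmono : MonotoneOn (fun t => f (max t 0)) (Iio T) := fun x hx y hy hxy =>
    hfmono ⟨le_max_right _ _, max_lt hx hT⟩ ⟨le_max_right _ _, max_lt hy hT⟩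
      (max_le_max hxy le_rfl)
  set M₀ : ℝ := sSup ((fun t => f (max t 0)) '' Iio T) with hM₀def
  have hftendsto : Tendsto f (nhdsWithin T (Iio T)) (nhds M₀) := by
    refine (hfbmono.tendsto_nhdsLT hfbbdd).congr' ?_
    filter_upwards [Ioo_mem_nhdsLT_of_mem (⟨hT, le_refl T⟩ : T ∈ Ioc 0 T)] with s hs
    rw [max_eq_left hs.1.le]
  have hM₀1 : 1 ≤ M₀ := by
    have : f (max 0 0) ∈ (fun t => f (max t 0)) '' Iio T := ⟨0, hT, rfl⟩
    have h2 := le_csSup hfbbdd this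
    simpa [hf0] using h2
  -- squeeze for f at T⁻ :  u t (T-t) ≤ M₀ - f t ≤ L₀ (T-t)
  have hIcoSub : ∀ t, 0 ≤ t → Ico t T ⊆ Ico (0:ℝ) T := fun t ht s hs => ⟨le_trans ht hs.1, hs.2⟩
  have hsq : ∀ t ∈ Ico (0:ℝ) T, u t * (T - t) ≤ M₀ - f t ∧ M₀ - f t ≤ L₀ * (T - t) := by
    intro t ht
    constructor
    · have hφ : MonotoneOn (fun s => f s - u t * s) (Ico t T) := by
        refine monoIco (((hfcontOn T le_rfl).mono (hIcoSub t ht.1)).sub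
          (continuousOn_const.mul continuousOn_id)) fun x hx => ?_
        have hx' : x ∈ Ico (0:ℝ) T := ⟨le_trans ht.1 hx.1.le, hx.2⟩
        have hD : HasDerivAt (fun s => f s - u t * s) (u x - u t) x := by
          have h := (hsol x hx').1.hasDerivAt.sub ((hasDerivAt_id' x).const_mul (u t))
          rw [mul_one] at h
          exact h
        refine ⟨hD.deriv ▸ hD, ?_⟩
        rw [hD.deriv]
        have := hmono ht hx' hx.1.le
        linarith
      have hev : ∀ᶠ s in nhdsWithin T (Iio T), 0 ≤ (f s - u t * s) - (f t - u t * t) := by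
        filter_upwards [Ioo_mem_nhdsLT_of_mem (⟨ht.2, le_refl T⟩ : T ∈ Ioc t T)] with s hs
        have := hφ ⟨le_rfl, ht.2⟩ ⟨hs.1.le, hs.2⟩ hs.1.le
        simp only at this
        linarith
      have hlim : Tendsto (fun s => (f s - u t * s) - (f t - u t * t)) (nhdsWithin T (Iio T))
          (nhds ((M₀ - u t * T) - (f t - u t * t))) :=
        (hftendsto.sub (((continuous_const.mul continuous_id).tendsto T).mono_left
          nhdsWithin_le_nhds)).sub_const _
      have hfin := ge_of_tendsto hlim hev
      nlinarith [hfin]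
    · have hφ : MonotoneOn (fun s => L₀ * s - f s) (Ico t T) := by
        refine monoIco ((continuousOn_const.mul continuousOn_id).sub
          ((hfcontOn T le_rfl).mono (hIcoSub t ht.1))) fun x hx => ?_
        have hx' : x ∈ Ico (0:ℝ) T := ⟨le_trans ht.1 hx.1.le, hx.2⟩
        have hD : HasDerivAt (fun s => L₀ * s - f s) (L₀ - u x) x := by
          have h := ((hasDerivAt_id' x).const_mul L₀).sub (hsol x hx').1.hasDerivAt
          rw [mul_one] at h
          exact h
        refine ⟨hD.deriv ▸ hD, ?_⟩
        rw [hD.deriv]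
        linarith [hL₀ge x hx']
      have hev : ∀ᶠ s in nhdsWithin T (Iio T), 0 ≤ (L₀ * s - f s) - (L₀ * t - f t) := by
        filter_upwards [Ioo_mem_nhdsLT_of_mem (⟨ht.2, le_refl T⟩ : T ∈ Ioc t T)] with s hs
        have := hφ ⟨le_rfl, ht.2⟩ ⟨hs.1.le, hs.2⟩ hs.1.le
        simp only at this
        linarith
      have hlim : Tendsto (fun s => (L₀ * s - f s) - (L₀ * t - f t)) (nhdsWithin T (Iio T))
          (nhds ((L₀ * T - M₀) - (L₀ * t - f t))) :=
        ((((continuous_const.mul continuous_id).tendsto T).mono_left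
          nhdsWithin_le_nhds).sub hftendsto).sub_const _
      have hfin := ge_of_tendsto hlim hev
      nlinarith [hfin]
  -- squeeze for u at T⁻
  have hsq2 : ∀ η > (0:ℝ), ∃ c, c ∈ Ico (0:ℝ) T ∧ ∀ t ∈ Ioo c T,
      (Ξ L₀ M₀ - η) * (T - t) ≤ L₀ - u t ∧ L₀ - u t ≤ (Ξ L₀ M₀ + η) * (T - t) := by
    intro η hη
    have hΞlim : Tendsto (fun s => Ξ (u s) (f s)) (nhdsWithin T (Iio T)) (nhds (Ξ L₀ M₀)) := by
      have h1 : Tendsto (fun s => (u s, f s)) (nhdsWithin T (Iio T)) (nhds (L₀, M₀)) :=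
        hutendsto.prodMk_nhds hftendsto
      exact (hΞcont.tendsto (L₀, M₀)).comp h1
    have hev : ∀ᶠ s in nhdsWithin T (Iio T), |Ξ (u s) (f s) - Ξ L₀ M₀| < η := by
      have := Metric.tendsto_nhds.mp hΞlim η hη
      filter_upwards [this] with s hs
      rwa [Real.dist_eq] at hs
    obtain ⟨c0, hc0, hsub⟩ := mem_nhdsLT_iff_exists_Ioo_subset.mp hev
    refine ⟨max c0 0, ⟨le_max_right _ _, max_lt hc0 hT⟩, fun t htIoo => ?_⟩
    have htIco : t ∈ Ico (0:ℝ) T := ⟨le_trans (le_max_right c0 0) htIoo.1.le, htIoo.2⟩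
    have hmemc0 : ∀ x, t < x → x < T → x ∈ Ioo c0 T := fun x hx1 hx2 =>
      ⟨lt_of_le_of_lt (le_trans (le_max_left c0 0) htIoo.1.le) hx1, hx2⟩
    constructor
    · have hφ : MonotoneOn (fun s => u s - (Ξ L₀ M₀ - η) * s) (Ico t T) := by
        refine monoIco (((hucontOn T le_rfl).mono (hIcoSub t htIco.1)).sub
          (continuousOn_const.mul continuousOn_id)) fun x hx => ?_
        have hx' : x ∈ Ico (0:ℝ) T := ⟨le_trans htIco.1 hx.1.le, hx.2⟩
        have hD : HasDerivAt (fun s => u s - (Ξ L₀ M₀ - η) * s)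
            (Ξ (u x) (f x) - (Ξ L₀ M₀ - η)) x := by
          have h0 : HasDerivAt u (Ξ (u x) (f x)) x := by
            have := (hsol x hx').2.1.hasDerivAt
            rwa [(hsol x hx').2.2] at this
          have h := h0.sub ((hasDerivAt_id' x).const_mul (Ξ L₀ M₀ - η))
          rw [mul_one] at h
          exact h
        refine ⟨hD.deriv ▸ hD, ?_⟩
        rw [hD.deriv]
        have h9 := hsub (hmemc0 x hx.1 hx.2)
        simp only [mem_setOf_eq] at h9
        have := (abs_lt.mp h9).1
        linarith
      have hev2 : ∀ᶠ s in nhdsWithin T (Iio T),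
          0 ≤ (u s - (Ξ L₀ M₀ - η) * s) - (u t - (Ξ L₀ M₀ - η) * t) := by
        filter_upwards [Ioo_mem_nhdsLT_of_mem (⟨htIco.2, le_refl T⟩ : T ∈ Ioc t T)] with s hs
        have := hφ ⟨le_rfl, htIco.2⟩ ⟨hs.1.le, hs.2⟩ hs.1.le
        simp only at this
        linarith
      have hlim : Tendsto (fun s => (u s - (Ξ L₀ M₀ - η) * s) - (u t - (Ξ L₀ M₀ - η) * t))
          (nhdsWithin T (Iio T))
          (nhds ((L₀ - (Ξ L₀ M₀ - η) * T) - (u t - (Ξ L₀ M₀ - η) * t))) :=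
        (hutendsto.sub (((continuous_const.mul continuous_id).tendsto T).mono_left
          nhdsWithin_le_nhds)).sub_const _
      have hfin := ge_of_tendsto hlim hev2
      nlinarith [hfin]
    · have hφ : MonotoneOn (fun s => (Ξ L₀ M₀ + η) * s - u s) (Ico t T) := by
        refine monoIco ((continuousOn_const.mul continuousOn_id).sub
          ((hucontOn T le_rfl).mono (hIcoSub t htIco.1))) fun x hx => ?_
        have hx' : x ∈ Ico (0:ℝ) T := ⟨le_trans htIco.1 hx.1.le, hx.2⟩
        have hD : HasDerivAt (fun s => (Ξ L₀ M₀ + η) * s - u s)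
            ((Ξ L₀ M₀ + η) - Ξ (u x) (f x)) x := by
          have h0 : HasDerivAt u (Ξ (u x) (f x)) x := by
            have := (hsol x hx').2.1.hasDerivAt
            rwa [(hsol x hx').2.2] at this
          have h := ((hasDerivAt_id' x).const_mul (Ξ L₀ M₀ + η)).sub h0
          rw [mul_one] at h
          exact h
        refine ⟨hD.deriv ▸ hD, ?_⟩
        rw [hD.deriv]
        have h9 := hsub (hmemc0 x hx.1 hx.2)
        simp only [mem_setOf_eq] at h9
        have := (abs_lt.mp h9).2
        linarith
      have hev2 : ∀ᶠ s in nhdsWithin T (Iio T),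
          0 ≤ ((Ξ L₀ M₀ + η) * s - u s) - ((Ξ L₀ M₀ + η) * t - u t) := by
        filter_upwards [Ioo_mem_nhdsLT_of_mem (⟨htIco.2, le_refl T⟩ : T ∈ Ioc t T)] with s hs
        have := hφ ⟨le_rfl, htIco.2⟩ ⟨hs.1.le, hs.2⟩ hs.1.le
        simp only at this
        linarith
      have hlim : Tendsto (fun s => ((Ξ L₀ M₀ + η) * s - u s) - ((Ξ L₀ M₀ + η) * t - u t))
          (nhdsWithin T (Iio T))
          (nhds (((Ξ L₀ M₀ + η) * T - L₀) - ((Ξ L₀ M₀ + η) * t - u t))) :=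
        ((((continuous_const.mul continuous_id).tendsto T).mono_left
          nhdsWithin_le_nhds).sub hutendsto).sub_const _
      have hfin := ge_of_tendsto hlim hev2
      nlinarith [hfin]
  -- Peano extension beyond T
  set ξ' : ℝ × ℝ → ℝ := fun p => Ξ p.2 p.1 with hξ'def
  have hξ'c : Continuous ξ' := hΞcont.comp continuous_swap
  obtain ⟨δ, hδpos, A, hAc, hAT, hAval, hAint⟩ := peano ξ' hξ'c (M₀, L₀) T
  set y : ℝ → ℝ := fun t => M₀ + ∫ s in T..t, (A s).2 with hydef
  set w : ℝ → ℝ := fun t => L₀ + ∫ s in T..t, ξ' (A s) with hwdef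
  have hyc2 : Continuous (fun s => (A s).2) := continuous_snd.comp hAc
  have hwc2 : Continuous (fun s => ξ' (A s)) := hξ'c.comp hAc
  have hyd : ∀ t, HasDerivAt y ((A t).2) t := fun t =>
    (intervalIntegral.integral_hasDerivAt_right (hyc2.intervalIntegrable _ _)
      (hyc2.stronglyMeasurableAtFilter _ _) hyc2.continuousAt).const_add M₀
  have hwd : ∀ t, HasDerivAt w (ξ' (A t)) t := fun t =>
    (intervalIntegral.integral_hasDerivAt_right (hwc2.intervalIntegrable _ _)
      (hwc2.stronglyMeasurableAtFilter _ _) hwc2.continuousAt).const_add L₀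
  have hyeq : ∀ t ∈ Icc T (T + δ), y t = (A t).1 := fun t ht => ((hAint t ht).1).symm
  have hweq : ∀ t ∈ Icc T (T + δ), w t = (A t).2 := fun t ht => ((hAint t ht).2).symm
  have hyT : y T = M₀ := by simp [hydef]
  have hAT1 : (A T).1 = M₀ := by rw [hAT]
  have hAT2 : (A T).2 = L₀ := by rw [hAT]
  set g : ℝ → ℝ := fun t => if t < T then f t else y t with hgdef
  have hgf : ∀ t, t < T → g t = f t := fun t ht => if_pos ht
  have hgy : ∀ t, T ≤ t → g t = y t := fun t ht => if_neg (not_lt.mpr ht)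
  have hgT : g T = M₀ := by rw [hgy T le_rfl, hyT]
  have hgfIio : ∀ t, t < T → g =ᶠ[nhds t] f := fun t ht =>
    eventually_of_mem (isOpen_Iio.mem_nhds ht) fun s hs => hgf s hs
  have hgyIoi : ∀ t, T < t → g =ᶠ[nhds t] y := fun t ht =>
    eventually_of_mem (isOpen_Ioi.mem_nhds ht) fun s hs => hgy s (le_of_lt hs)
  have hdgIio : ∀ t, t < T → deriv g t = u t := fun t ht => (hgfIio t ht).deriv_eq
  have hdgIoi : ∀ t, T < t → deriv g t = (A t).2 := fun t ht => by
    rw [(hgyIoi t ht).deriv_eq, (hyd t).deriv]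
  -- derivative of g at the seam from the left
  have hslopeL : HasDerivWithinAt g L₀ (Iic T) T := by
    rw [hasDerivWithinAt_iff_tendsto_slope, Iic_diff_right]
    have hev : ∀ᶠ s in nhdsWithin T (Iio T), slope g T s = (M₀ - f s) / (T - s) := by
      filter_upwards [Ioo_mem_nhdsLT_of_mem (⟨hT, le_refl T⟩ : T ∈ Ioc 0 T)] with s hs
      rw [slope_def_field, hgf s hs.2, hgT,
        show M₀ - f s = -(f s - M₀) by ring, show T - s = -(s - T) by ring, neg_div_neg_eq]
    rw [tendsto_congr' hev]
    refine tendsto_of_tendsto_of_tendsto_of_le_of_le' hutendsto tendsto_const_nhds ?_ ?_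
    · filter_upwards [Ioo_mem_nhdsLT_of_mem (⟨hT, le_refl T⟩ : T ∈ Ioc 0 T)] with s hs
      have h1 := (hsq s ⟨hs.1.le, hs.2⟩).1
      have h2 : 0 < T - s := by linarith [hs.2]
      rw [le_div_iff₀ h2]
      linarith
    · filter_upwards [Ioo_mem_nhdsLT_of_mem (⟨hT, le_refl T⟩ : T ∈ Ioc 0 T)] with s hs
      have h1 := (hsq s ⟨hs.1.le, hs.2⟩).2
      have h2 : 0 < T - s := by linarith [hs.2]
      rw [div_le_iff₀ h2]
      linarith
  have hslopeR : HasDerivWithinAt g L₀ (Ici T) T := by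
    have h0 : HasDerivWithinAt y ((A T).2) (Ici T) T := (hyd T).hasDerivWithinAt
    rw [hAT2] at h0
    refine h0.congr_of_eventuallyEq ?_ (by rw [hgy T le_rfl])
    filter_upwards [self_mem_nhdsWithin] with s hs
    exact hgy s hs
  have hgdT : HasDerivAt g L₀ T := by
    have h1 := hslopeL.union hslopeR
    rw [Iic_union_Ici] at h1
    exact hasDerivWithinAt_univ.mp h1
  have hdgT : deriv g T = L₀ := hgdT.deriv
  have hdgIci : ∀ s, T ≤ s → s < T + δ → deriv g s = w s := by
    intro s hs1 hs2
    rcases eq_or_lt_of_le hs1 with h | h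
    · have hwT : w T = L₀ := by rw [hweq T ⟨le_rfl, by linarith⟩, hAT2]
      rw [← h, hdgT, hwT]
    · rw [hdgIoi s h, hweq s ⟨hs1, hs2.le⟩]
  have hddgIoo : ∀ t ∈ Ioo T (T + δ), HasDerivAt (deriv g) (ξ' (A t)) t := by
    intro t ht
    refine (hwd t).congr_of_eventuallyEq ?_
    filter_upwards [isOpen_Ioo.mem_nhds ht] with s hs
    exact hdgIci s hs.1.le hs.2
  have hIcoNhd : Ico T (T + δ) ∈ nhdsWithin T (Ici T) := by
    refine mem_nhdsWithin.mpr ⟨Iio (T + δ), isOpen_Iio, by simpa using hδpos, ?_⟩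
    rintro s ⟨hs1, hs2⟩
    exact ⟨hs2, hs1⟩
  have hddgR : HasDerivWithinAt (deriv g) (ξ' (A T)) (Ici T) T := by
    refine ((hwd T).hasDerivWithinAt).congr_of_eventuallyEq ?_ ?_
    · filter_upwards [hIcoNhd] with s hs
      exact hdgIci s hs.1 hs.2
    · have hwT : w T = L₀ := by rw [hweq T ⟨le_rfl, by linarith⟩, hAT2]
      rw [hdgT, hwT]
  have hddgL : HasDerivWithinAt (deriv g) (Ξ L₀ M₀) (Iic T) T := by
    rw [hasDerivWithinAt_iff_tendsto_slope, Iic_diff_right, Metric.tendsto_nhds]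
    intro η hη
    obtain ⟨c, hcIco, hc⟩ := hsq2 (η / 2) (by linarith)
    filter_upwards [Ioo_mem_nhdsLT_of_mem (⟨hcIco.2, le_refl T⟩ : T ∈ Ioc c T)] with s hs
    have h1 := hc s hs
    have h2 : 0 < T - s := by linarith [hs.2]
    have hslope : slope (deriv g) T s = (L₀ - u s) / (T - s) := by
      rw [slope_def_field, hdgT, hdgIio s hs.2,
        show L₀ - u s = -(u s - L₀) by ring, show T - s = -(s - T) by ring, neg_div_neg_eq]
    rw [hslope, Real.dist_eq, abs_lt]
    constructor
    · have h3 := h1.1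
      have h4 : (Ξ L₀ M₀ - η / 2) ≤ (L₀ - u s) / (T - s) := by
        rw [le_div_iff₀ h2]; linarith
      linarith
    · have h3 := h1.2
      have h4 : (L₀ - u s) / (T - s) ≤ Ξ L₀ M₀ + η / 2 := by
        rw [div_le_iff₀ h2]; linarith
      linarith
  have hddgT : HasDerivAt (deriv g) (Ξ L₀ M₀) T := by
    have hx : ξ' (A T) = Ξ L₀ M₀ := by rw [hAT]
    rw [hx] at hddgR
    have h1 := hddgL.union hddgR
    rw [Iic_union_Ici] at h1
    exact hasDerivWithinAt_univ.mp h1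
  -- conclude : g extends f, contradicting maximality
  refine hmax ⟨T + δ, g, by linarith, fun t ht => hgf t ht.2, ?_⟩
  intro t ht
  rcases lt_trichotomy t T with hlt | heqT | hgt
  · have htIco : t ∈ Ico (0:ℝ) T := ⟨ht.1, hlt⟩
    obtain ⟨hd1, hd2, hd3⟩ := hsol t htIco
    have he1 : g =ᶠ[nhds t] f := hgfIio t hlt
    have he2 : deriv g =ᶠ[nhds t] deriv f := by
      filter_upwards [isOpen_Iio.mem_nhds hlt] with s hs
      exact hdgIio s hs
    refine ⟨he1.differentiableAt_iff.mpr hd1, he2.differentiableAt_iff.mpr hd2, ?_⟩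
    rw [he2.deriv_eq, hd3, hdgIio t hlt, hgf t hlt]
  · subst heqT
    refine ⟨hgdT.differentiableAt, hddgT.differentiableAt, ?_⟩
    rw [hddgT.deriv, hdgT, hgT]
  · have h2 : t ∈ Ioo T (T + δ) := ⟨hgt, ht.2⟩
    have hd1 : HasDerivAt g ((A t).2) t := (hyd t).congr_of_eventuallyEq (hgyIoi t hgt)
    refine ⟨hd1.differentiableAt, (hddgIoo t h2).differentiableAt, ?_⟩
    rw [(hddgIoo t h2).deriv, hdgIoi t hgt, hgy t hgt.le, hyeq t ⟨hgt.le, h2.2.le⟩]
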